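/- Let S/R be a Frobenius extension with _R S_R centrally projective over R and M a finitely generated R-module with Ext^i_R(M, ω) = 0 for all i ≥ 1. Then Ext^i_S(S ⊗_R M, S ⊗_R ω) = 0 for all i ≥ 1. -/

import Mathlib

open CategoryTheory

noncomputable section

/-- `Ext^n_A(M, N) = 0`, via Mathlib's `Ext` for the `ℤ`-linear abelian
category of left `A`-modules. -/
def ExtVanish (A : Type) [Ring A] (n : ℕ) (M N : Type) [AddCommGroup M] [Module A M]
    [AddCommGroup N] [Module A N] : Prop :=
  Subsingleton (((Ext ℤ (ModuleCat.{0} A) n).obj (Opposite.op (ModuleCat.of A M))).obj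
    (ModuleCat.of A N))

/-- A ring extension `l : R → S` is a Frobenius extension; this is encoded by the
classical equivalent data of a Frobenius system: an `R`-`R`-bimodule map `E : S → R`
together with dual bases `x₁,…,xₘ, y₁,…,yₘ ∈ S`.  This is equivalent to: `_R S` is
finitely generated projective and `_S S_R ≅ Hom_R(_R S_S, _R R_R)` as `S`-`R`-bimodules. -/
def IsFrobeniusExtension {R S : Type} [Ring R] [Ring S] (l : R →+* S) : Prop :=
  ∃ (E : S →+ R) (m : ℕ) (x y : Fin m → S),
    (∀ r s, E (l r * s) = r * E s) ∧ (∀ s r, E (s * l r) = E s * r) ∧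
    (∀ s, (∑ i, x i * l (E (y i * s))) = s) ∧
    (∀ s, (∑ i, l (E (s * x i)) * y i) = s)

/-- The `R`-`R`-bimodule `S` (via `l`) is centrally projective over `R`, i.e. `_R S_R`
is a direct summand of a finite direct sum of copies of the regular bimodule `_R R_R`. -/
def IsCentrallyProjective {R S : Type} [Ring R] [Ring S] (l : R →+* S) : Prop :=
  ∃ (n : ℕ) (i : S →+ (Fin n → R)) (p : (Fin n → R) →+ S),
    (∀ r s, i (l r * s) = fun j => r * i s j) ∧
    (∀ s r, i (s * l r) = fun j => i s j * r) ∧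
    (∀ r v, p (fun j => r * v j) = l r * p v) ∧
    (∀ v r, p (fun j => v j * r) = p v * l r) ∧
    (∀ s, p (i s) = s)

/-- `(W, t)` realizes the induced module `S ⊗_R M` of the `R`-module `M` along
`l : R → S`: `t s m = s ⊗ m` is additive in each variable, `R`-balanced and
`S`-equivariant, and satisfies the universal property among `S`-modules. -/
def IsInducedTensor {R S : Type} [Ring R] [Ring S] (l : R →+* S)
    (M : Type) [AddCommGroup M] [Module R M]
    (W : Type) [AddCommGroup W] [Module S W] (t : S →+ M →+ W) : Prop :=
  (∀ s r m, t (s * l r) m = t s (r • m)) ∧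
  (∀ s' s m, t (s' * s) m = s' • t s m) ∧
  (∀ (V : Type) [AddCommGroup V] [Module S V] (b : S →+ M →+ V),
    (∀ s r m, b (s * l r) m = b s (r • m)) → (∀ s' s m, b (s' * s) m = s' • b s m) →
    ∃! h : W →ₗ[S] V, ∀ s m, h (t s m) = b s m)

namespace FrobAux
variable {R S : Type} [Ring R] [Ring S]

/-- Bundled Frobenius system data. -/
structure FrobData (l : R →+* S) where
  E : S →+ R
  m : ℕ
  x : Fin m → S
  y : Fin m → S
  hE1 : ∀ r s, E (l r * s) = r * E s
  hE2 : ∀ s r, E (s * l r) = E s * r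
  hxy : ∀ s, (∑ i, x i * l (E (y i * s))) = s
  hyx : ∀ s, (∑ i, l (E (s * x i)) * y i) = s

variable (l : R →+* S)
abbrev SR : ModuleCat.{0} R := (ModuleCat.restrictScalars l).obj (ModuleCat.of S S)
def toS (z : SR l) : S := z
def ofS (z : S) : SR l := z
def resOf {Y : ModuleCat.{0} S} (w : Y) : (ModuleCat.restrictScalars l).obj Y := w
def resTo {Y : ModuleCat.{0} S} (w : (ModuleCat.restrictScalars l).obj Y) : Y := w

lemma resOf_smul {Y : ModuleCat.{0} S} (r : R) (w : Y) :
    r • (resOf l w) = resOf l (l r • w) := rfl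

def asHom {X : ModuleCat.{0} R} (f : (ModuleCat.coextendScalars l).obj X) : SR l →ₗ[R] X :=
  { toFun := (show SR l →ₗ[R] X from f).toFun
    map_add' := (show SR l →ₗ[R] X from f).map_add'
    map_smul' := (show SR l →ₗ[R] X from f).map_smul' }

variable {l} (D : FrobData l)

def bcan {X : ModuleCat.{0} R} (s : S) (v : X) : (ModuleCat.coextendScalars l).obj X :=
  show SR l →ₗ[R] X from
  { toFun := fun z => D.E (toS l z * s) • v
    map_add' := fun a b => by
      show D.E ((toS l a + toS l b) * s) • v = D.E (toS l a * s) • v + D.E (toS l b * s) • v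
      rw [add_mul, map_add, add_smul]
    map_smul' := fun r z => by
      show D.E ((l r * toS l z) * s) • v = r • (D.E (toS l z * s) • v)
      rw [mul_assoc, D.hE1, mul_smul] }

lemma bcan_apply {X : ModuleCat.{0} R} (s : S) (v : X) (z : S) :
    asHom l (bcan D s v) (ofS l z) = D.E (z * s) • v := rfl

lemma bcan_add {X : ModuleCat.{0} R} (s : S) (a b : X) :
    bcan D s (a + b) = bcan D s a + bcan D s b := by
  apply LinearMap.ext; intro z
  show D.E (toS l z * s) • (a + b) = D.E (toS l z * s) • a + D.E (toS l z * s) • b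
  rw [smul_add]

lemma bcan_smul {X : ModuleCat.{0} R} (s : S) (r : R) (v : X) :
    bcan D s (r • v) = (s * l r) • bcan D 1 v := by
  apply LinearMap.ext; intro z
  show D.E (toS l z * s) • (r • v) = D.E ((toS l z * (s * l r)) * 1) • v
  rw [mul_one, ← mul_assoc, D.hE2, ← mul_smul]

lemma coext_smul_apply' {X : ModuleCat.{0} R} (s : S) (g : (ModuleCat.coextendScalars l).obj X)
    (z : S) : asHom l (s • g) (ofS l z) = asHom l g (ofS l (z * s)) := rfl

def fwd {X : ModuleCat.{0} R} {Y : ModuleCat.{0} S}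
    (G : (ModuleCat.coextendScalars l).obj X ⟶ Y) : X ⟶ (ModuleCat.restrictScalars l).obj Y := ModuleCat.ofHom (X := X) (Y := (ModuleCat.restrictScalars l).obj Y) {
  toFun v := resOf l (G (bcan D 1 v))
  map_add' a b := by dsimp only; rw [bcan_add, map_add]; rfl
  map_smul' r v := by dsimp only; rw [bcan_smul, one_mul, map_smul]; rfl }

lemma fwd_apply {X : ModuleCat.{0} R} {Y : ModuleCat.{0} S}
    (G : (ModuleCat.coextendScalars l).obj X ⟶ Y) (v : X) :
    fwd D G v = resOf l (G (bcan D 1 v)) := rfl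

lemma ofS_sum {ι : Type} (s : Finset ι) (f : ι → S) :
    ofS l (∑ i ∈ s, f i) = ∑ i ∈ s, ofS l (f i) := rfl

lemma ofS_smul (r : R) (z : S) : r • ofS l z = ofS l (l r * z) := rfl

lemma resTo_smul {Y : ModuleCat.{0} S} (r : R) (w : (ModuleCat.restrictScalars l).obj Y) :
    resTo l (r • w) = l r • resTo l w := rfl

lemma key {X : ModuleCat.{0} R} {Y : ModuleCat.{0} S}
    (g : X ⟶ (ModuleCat.restrictScalars l).obj Y)
    (f : (ModuleCat.coextendScalars l).obj X) (s : S) :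
    ∑ i, D.x i • resTo l (g (asHom l f (ofS l (D.y i * s)))) =
      s • ∑ i, D.x i • resTo l (g (asHom l f (ofS l (D.y i)))) := by
  have h1 : ∀ i, asHom l f (ofS l (D.y i * s)) =
      ∑ j, D.E (D.y i * (s * D.x j)) • asHom l f (ofS l (D.y j)) := by
    intro i
    have : ofS l (D.y i * s) = ∑ j, D.E (D.y i * (s * D.x j)) • ofS l (D.y j) := by
      conv_lhs => rw [← D.hyx (D.y i * s)]
      rw [ofS_sum]
      congr 1; funext j
      rw [ofS_smul, mul_assoc]
    rw [this, map_sum]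
    congr 1; funext j
    rw [map_smul]
  calc ∑ i, D.x i • resTo l (g (asHom l f (ofS l (D.y i * s))))
      = ∑ i, ∑ j, (D.x i * l (D.E (D.y i * (s * D.x j)))) •
          resTo l (g (asHom l f (ofS l (D.y j)))) := by
        congr 1; funext i
        rw [h1, map_sum, ]
        rw [show resTo l (∑ j, (g (D.E (D.y i * (s * D.x j)) • asHom l f (ofS l (D.y j))))) =
          ∑ j, resTo l (g (D.E (D.y i * (s * D.x j)) • asHom l f (ofS l (D.y j)))) from rfl]
        rw [Finset.smul_sum]
        congr 1; funext j
        rw [map_smul, resTo_smul, smul_smul]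
    _ = ∑ j, ∑ i, (D.x i * l (D.E (D.y i * (s * D.x j)))) •
          resTo l (g (asHom l f (ofS l (D.y j)))) := Finset.sum_comm
    _ = ∑ j, (s * D.x j) • resTo l (g (asHom l f (ofS l (D.y j)))) := by
        congr 1; funext j
        rw [← Finset.sum_smul, D.hxy]
    _ = s • ∑ j, D.x j • resTo l (g (asHom l f (ofS l (D.y j)))) := by
        rw [Finset.smul_sum]
        congr 1; funext j
        rw [mul_smul]

def bwd {X : ModuleCat.{0} R} {Y : ModuleCat.{0} S}
    (g : X ⟶ (ModuleCat.restrictScalars l).obj Y) : (ModuleCat.coextendScalars l).obj X ⟶ Y := ModuleCat.ofHom (X := (ModuleCat.coextendScalars l).obj X) (Y := Y) {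
  toFun f := ∑ i, D.x i • resTo l (g (asHom l f (ofS l (D.y i))))
  map_add' a b := by
    dsimp only
    rw [← Finset.sum_add_distrib]
    congr 1; funext i
    rw [show asHom l (a + b) (ofS l (D.y i)) = asHom l a (ofS l (D.y i)) + asHom l b (ofS l (D.y i)) from rfl]
    rw [map_add]
    rw [show resTo l (g (asHom l a (ofS l (D.y i))) + g (asHom l b (ofS l (D.y i)))) =
      resTo l (g (asHom l a (ofS l (D.y i)))) + resTo l (g (asHom l b (ofS l (D.y i)))) from rfl]
    rw [smul_add]
  map_smul' s f := by
    dsimp only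
    have e : ∀ i, asHom l (s • f) (ofS l (D.y i)) = asHom l f (ofS l (D.y i * s)) := fun i => rfl
    show ∑ i, D.x i • resTo l (g (asHom l f (ofS l (D.y i * s)))) = _
    rw [key D g f s]
    rfl }

lemma bwd_apply {X : ModuleCat.{0} R} {Y : ModuleCat.{0} S}
    (g : X ⟶ (ModuleCat.restrictScalars l).obj Y) (f : (ModuleCat.coextendScalars l).obj X) :
    bwd D g f = ∑ i, D.x i • resTo l (g (asHom l f (ofS l (D.y i)))) := rfl

lemma coext_ext {X : ModuleCat.{0} R} {a b : (ModuleCat.coextendScalars l).obj X}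
    (h : ∀ z : S, asHom l a (ofS l z) = asHom l b (ofS l z)) : a = b := by
  show (a : SR l →ₗ[R] X) = b
  apply LinearMap.ext
  intro z
  exact h (toS l z)

lemma asHom_sum {X : ModuleCat.{0} R} {ι : Type} (s : Finset ι)
    (f : ι → (ModuleCat.coextendScalars l).obj X) (z : S) :
    asHom l (∑ i ∈ s, f i) (ofS l z) = ∑ i ∈ s, asHom l (f i) (ofS l z) := by
  induction s using Finset.cons_induction with
  | empty => rfl
  | cons a s ha ih =>
      rw [Finset.sum_cons, Finset.sum_cons, ← ih]
      rfl

lemma asHom_smul {X : ModuleCat.{0} R} (s : S) (f : (ModuleCat.coextendScalars l).obj X)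
    (z : S) : asHom l (s • f) (ofS l z) = asHom l f (ofS l (z * s)) := rfl

lemma asHom_bcan {X : ModuleCat.{0} R} (s : S) (v : X) (z : S) :
    asHom l (bcan D s v) (ofS l z) = D.E (z * s) • v := rfl

lemma left_inv {X : ModuleCat.{0} R} {Y : ModuleCat.{0} S}
    (G : (ModuleCat.coextendScalars l).obj X ⟶ Y) : bwd D (fwd D G) = G := by
  apply ModuleCat.hom_ext; apply LinearMap.ext
  intro f
  have hre : ∀ (w : X), resTo l (fwd D G w) = G (bcan D 1 w) :=
    fun w => rfl
  show ∑ i, D.x i • resTo l (fwd D G (asHom l f (ofS l (D.y i)))) = G f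
  have : ∀ i, D.x i • resTo l (fwd D G (asHom l f (ofS l (D.y i)))) =
      G (D.x i • bcan D 1 (asHom l f (ofS l (D.y i)))) := by
    intro i
    rw [hre, map_smul]
  simp only [this]
  rw [← map_sum]
  congr 1
  apply coext_ext
  intro z
  rw [asHom_sum]
  have e2 : ∀ i, asHom l (D.x i • bcan D 1 (asHom l f (ofS l (D.y i)))) (ofS l z) =
      D.E (z * D.x i) • asHom l f (ofS l (D.y i)) := by
    intro i
    rw [asHom_smul, asHom_bcan, mul_one]
  simp only [e2]
  calc ∑ i, D.E (z * D.x i) • asHom l f (ofS l (D.y i))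
      = asHom l f (∑ i, D.E (z * D.x i) • ofS l (D.y i)) := by rw [map_sum]; simp only [map_smul]
    _ = asHom l f (ofS l z) := by
        congr 1
        show (∑ i, ofS l (l (D.E (z * D.x i)) * D.y i)) = ofS l z
        rw [← ofS_sum, D.hyx]

lemma right_inv {X : ModuleCat.{0} R} {Y : ModuleCat.{0} S}
    (g : X ⟶ (ModuleCat.restrictScalars l).obj Y) : fwd D (bwd D g) = g := by
  apply ModuleCat.hom_ext; apply LinearMap.ext
  intro v
  show resOf l (∑ i, D.x i • resTo l (g (asHom l (bcan D 1 v) (ofS l (D.y i))))) = g v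
  have : ∀ i, D.x i • resTo l (g (asHom l (bcan D 1 v) (ofS l (D.y i)))) =
      (D.x i * l (D.E (D.y i * 1))) • resTo l (g v) := by
    intro i
    rw [asHom_bcan, map_smul, resTo_smul, smul_smul]
  simp only [this]
  rw [← Finset.sum_smul, D.hxy, one_smul]
  rfl

/-- The Frobenius adjunction: coextension of scalars is also LEFT adjoint to restriction. -/
def adjFrob : ModuleCat.coextendScalars l ⊣ ModuleCat.restrictScalars l :=
  Adjunction.mkOfHomEquiv
    { homEquiv := fun X Y =>
        { toFun := fwd D
          invFun := bwd D
          left_inv := left_inv D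
          right_inv := right_inv D }
      homEquiv_naturality_left_symm := fun f g => rfl
      homEquiv_naturality_right := fun f g => rfl }

instance : (ModuleCat.coextendScalars l : ModuleCat.{0} R ⥤ ModuleCat.{0} S).Additive where
  map_add := by
    intros X Y f g
    apply ModuleCat.hom_ext; apply LinearMap.ext; intro h
    refine coext_ext ?_
    intro z
    show f (asHom l h (ofS l z)) + g (asHom l h (ofS l z)) = _
    rfl

instance : (ModuleCat.restrictScalars l : ModuleCat.{0} S ⥤ ModuleCat.{0} R).PreservesEpimorphisms where
  preserves f hf := by
    rw [ModuleCat.epi_iff_surjective] at hf ⊢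
    exact hf

instance : Limits.PreservesLimitsOfSize.{0, 0}
    (ModuleCat.coextendScalars l : ModuleCat.{0} R ⥤ ModuleCat.{0} S) :=
  (ModuleCat.restrictCoextendScalarsAdj.{0} l).rightAdjoint_preservesLimits

def coextPreservesColimits : Limits.PreservesColimitsOfSize.{0, 0}
    (ModuleCat.coextendScalars l : ModuleCat.{0} R ⥤ ModuleCat.{0} S) :=
  (adjFrob D).leftAdjoint_preservesColimits

lemma subsingleton_of_isZero {A : Type} [Ring A] {N : ModuleCat.{0} A}
    (h : Limits.IsZero N) : Subsingleton N := by
  constructor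
  intro a b
  have h0 : (𝟙 N) = (0 : N ⟶ N) := h.eq_of_src _ _
  have : ∀ c : N, c = 0 := by
    intro c
    conv_lhs => rw [show c = (𝟙 N) c from rfl, h0]
    rfl
  rw [this a, this b]

instance : Limits.PreservesFiniteLimits
    (ModuleCat.coextendScalars l : ModuleCat.{0} R ⥤ ModuleCat.{0} S) :=
  Limits.PreservesLimitsOfSize.preservesFiniteLimits _

def coextPreservesFiniteColimits : Limits.PreservesFiniteColimits
    (ModuleCat.coextendScalars l : ModuleCat.{0} R ⥤ ModuleCat.{0} S) :=
  letI := coextPreservesColimits D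
  Limits.PreservesColimitsOfSize.preservesFiniteColimits _

/-- coextension along a Frobenius extension maps projective resolutions to
projective resolutions. -/
def mapRes {Z : ModuleCat.{0} R} (P : ProjectiveResolution Z) {U : ModuleCat.{0} S}
    (e : (ModuleCat.coextendScalars l).obj Z ≅ U) : ProjectiveResolution U :=
  letI := coextPreservesFiniteColimits D
  letI : ((ModuleCat.coextendScalars l : ModuleCat.{0} R ⥤ ModuleCat.{0} S)).PreservesHomology :=
    inferInstance
  { complex := ((ModuleCat.coextendScalars l).mapHomologicalComplex _).obj P.complex
    projective := fun n => (adjFrob D).map_projective _ (P.projective n)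
    π := ((ModuleCat.coextendScalars l).mapHomologicalComplex _).map P.π ≫
      (HomologicalComplex.singleMapHomologicalComplex (ModuleCat.coextendScalars l) _ 0).hom.app Z
      ≫ (ChainComplex.single₀ (ModuleCat.{0} S)).map e.hom
    quasiIso := by
      haveI h1 : QuasiIso (((ModuleCat.coextendScalars l).mapHomologicalComplex
        (ComplexShape.down ℕ)).map P.π) := inferInstance
      haveI h2 : QuasiIso ((HomologicalComplex.singleMapHomologicalComplex
          (ModuleCat.coextendScalars l) (ComplexShape.down ℕ) 0).hom.app Z ≫
          (ChainComplex.single₀ (ModuleCat.{0} S)).map e.hom) := by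
        haveI : IsIso ((HomologicalComplex.singleMapHomologicalComplex
            (ModuleCat.coextendScalars l) (ComplexShape.down ℕ) 0).hom.app Z) := inferInstance
        haveI : IsIso ((ChainComplex.single₀ (ModuleCat.{0} S)).map e.hom) :=
          inferInstance
        infer_instance
      exact quasiIso_comp _ _ }

section Ew

variable {A : Type} [Ring A]

/-- Elementwise exactness of the complex `Hom_A(K_•, X)` at degree `n+1`. -/
def EwExact (K : ChainComplex (ModuleCat.{0} A) ℕ) (X : ModuleCat.{0} A) (n : ℕ) : Prop :=
  ∀ φ : K.X (n+1) ⟶ X, K.d (n+2) (n+1) ≫ φ = 0 →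
    ∃ ψ : K.X n ⟶ X, K.d (n+1) n ≫ ψ = φ

lemma ew_iff_exactAt (K : ChainComplex (ModuleCat.{0} A) ℕ) (X : ModuleCat.{0} A) (n : ℕ) :
    (K.linearYonedaObj ℤ X).ExactAt (n+1) ↔ EwExact K X n := by
  rw [HomologicalComplex.exactAt_iff' (K.linearYonedaObj ℤ X) n (n+1) (n+2)
    (ComplexShape.prev_eq' _ (by simp)) (ComplexShape.next_eq' _ (by simp))]
  rw [ShortComplex.moduleCat_exact_iff]
  constructor
  · intro h φ hφ
    obtain ⟨ψ, hψ⟩ := h φ hφ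
    exact ⟨ψ, hψ⟩
  · intro h φ hφ
    obtain ⟨ψ, hψ⟩ := h φ hφ
    exact ⟨ψ, hψ⟩

lemma subsingletonExt_iff {Z : ModuleCat.{0} A} (P : ProjectiveResolution Z)
    (n : ℕ) (X : ModuleCat.{0} A) :
    Subsingleton (((Ext ℤ (ModuleCat.{0} A) (n+1)).obj (Opposite.op Z)).obj X) ↔
      EwExact P.complex X n := by
  rw [← ew_iff_exactAt, HomologicalComplex.exactAt_iff_isZero_homology]
  constructor
  · intro h
    exact Limits.IsZero.of_iso (@ModuleCat.isZero_of_subsingleton _ _ _ h)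
      (P.isoExt (n+1) X).symm
  · intro h
    exact subsingleton_of_isZero (Limits.IsZero.of_iso h (P.isoExt (n+1) X))

lemma ew_retract {K : ChainComplex (ModuleCat.{0} A) ℕ} {X Xp : ModuleCat.{0} A}
    (ρ : X ⟶ Xp) (σ : Xp ⟶ X) (h : ρ ≫ σ = 𝟙 X) {n : ℕ}
    (hE : EwExact K Xp n) : EwExact K X n := by
  intro φ hφ
  obtain ⟨ψ, hψ⟩ := hE (φ ≫ ρ) (by rw [← Category.assoc, hφ, Limits.zero_comp])
  refine ⟨ψ ≫ σ, ?_⟩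
  rw [← Category.assoc, hψ, Category.assoc, h, Category.comp_id]

lemma ew_pow {K : ChainComplex (ModuleCat.{0} A) ℕ} {Y : Type} [AddCommGroup Y] [Module A Y]
    {n : ℕ} (hE : EwExact K (ModuleCat.of A Y) n) (k : ℕ) :
    EwExact K (ModuleCat.of A (Fin k → Y)) n := by
  intro φ hφ
  have comp : ∀ j : Fin k, ∃ ψj : K.X n ⟶ ModuleCat.of A Y,
      K.d (n+1) n ≫ ψj = φ ≫ ModuleCat.ofHom (LinearMap.proj j) := by
    intro j
    refine hE (φ ≫ ModuleCat.ofHom (LinearMap.proj j)) ?_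
    rw [← Category.assoc, hφ, Limits.zero_comp]
  choose ψ hψ using comp
  refine ⟨ModuleCat.ofHom (LinearMap.pi (fun j => (ψ j).hom)), ?_⟩
  apply ModuleCat.hom_ext; apply LinearMap.ext
  intro v
  funext j
  exact ConcreteCategory.congr_hom (hψ j) v

end Ew

lemma bcan_nat {X X' : ModuleCat.{0} R} (g : X ⟶ X') (v : X) :
    (ModuleCat.coextendScalars l).map g (bcan D 1 v) = bcan D 1 (g v) := by
  refine coext_ext ?_
  intro z
  show g (D.E (z * 1) • v) = D.E (z * 1) • g v
  rw [map_smul]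

lemma fwd_nat {X X' : ModuleCat.{0} R} {Y : ModuleCat.{0} S} (g : X ⟶ X')
    (φ : (ModuleCat.coextendScalars l).obj X' ⟶ Y) :
    fwd D ((ModuleCat.coextendScalars l).map g ≫ φ) = g ≫ fwd D φ := by
  apply ModuleCat.hom_ext; apply LinearMap.ext
  intro v
  show resOf l (φ ((ModuleCat.coextendScalars l).map g (bcan D 1 v))) =
    resOf l (φ (bcan D 1 (g v)))
  rw [bcan_nat]

lemma fwd_zero {X : ModuleCat.{0} R} {Y : ModuleCat.{0} S} :
    fwd D (0 : (ModuleCat.coextendScalars l).obj X ⟶ Y) = 0 := rfl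

lemma bwd_nat {X X' : ModuleCat.{0} R} {Y : ModuleCat.{0} S} (g : X ⟶ X')
    (ψ : X' ⟶ (ModuleCat.restrictScalars l).obj Y) :
    bwd D (g ≫ ψ) = (ModuleCat.coextendScalars l).map g ≫ bwd D ψ := rfl

include D in
lemma ew_adj {K : ChainComplex (ModuleCat.{0} R) ℕ} {Y : ModuleCat.{0} S} {n : ℕ}
    (hE : EwExact K ((ModuleCat.restrictScalars l).obj Y) n) :
    EwExact (((ModuleCat.coextendScalars l).mapHomologicalComplex _).obj K) Y n := by
  intro φ hφ
  have hφ' : K.d (n+2) (n+1) ≫ fwd D φ = 0 := by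
    refine (fwd_nat D (K.d (n+2) (n+1)) φ).symm.trans ?_
    have : (ModuleCat.coextendScalars l).map (K.d (n+2) (n+1)) ≫ φ = 0 := hφ
    rw [this, fwd_zero]
  obtain ⟨ψ', hψ'⟩ := hE (fwd D φ) hφ'
  refine ⟨bwd D ψ', ?_⟩
  show (ModuleCat.coextendScalars l).map (K.d (n+1) n) ≫ bwd D ψ' = φ
  rw [← bwd_nat, hψ']
  exact left_inv D φ

lemma expand {X : ModuleCat.{0} R} (f : (ModuleCat.coextendScalars l).obj X) (s : S)
    (i : Fin D.m) : asHom l f (ofS l (D.y i * s)) =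
      ∑ j, D.E (D.y i * (s * D.x j)) • asHom l f (ofS l (D.y j)) := by
  have : ofS l (D.y i * s) = ∑ j, D.E (D.y i * (s * D.x j)) • ofS l (D.y j) := by
    conv_lhs => rw [← D.hyx (D.y i * s)]
    rw [ofS_sum]
    congr 1; funext j
    rw [ofS_smul, mul_assoc]
  rw [this, map_sum]
  congr 1; funext j
  rw [map_smul]

lemma recover {X : ModuleCat.{0} R} (f : (ModuleCat.coextendScalars l).obj X) (z : S) :
    ∑ i, D.E (z * D.x i) • asHom l f (ofS l (D.y i)) = asHom l f (ofS l z) := by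
  calc ∑ i, D.E (z * D.x i) • asHom l f (ofS l (D.y i))
      = asHom l f (∑ i, D.E (z * D.x i) • ofS l (D.y i)) := by
        rw [map_sum]; simp only [map_smul]
    _ = asHom l f (ofS l z) := by
        congr 1
        show (∑ i, ofS l (l (D.E (z * D.x i)) * D.y i)) = ofS l z
        rw [← ofS_sum, D.hyx]

section Induced

variable {M : Type} [AddCommGroup M] [Module R M]
variable {V : Type} [AddCommGroup V] [Module S V] (u : S →+ M →+ V)

lemma bcan_zero (s : S) : bcan D s (0 : ModuleCat.of R M) = 0 := by
  refine coext_ext ?_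
  intro z
  show D.E (z * s) • (0 : M) = _
  rw [smul_zero]
  rfl

lemma bcan_sadd (s s' : S) (v : ModuleCat.of R M) :
    bcan D (s + s') v = bcan D s v + bcan D s' v := by
  refine coext_ext ?_
  intro z
  show D.E (z * (s + s')) • v = D.E (z * s) • v + D.E (z * s') • v
  rw [mul_add, map_add, add_smul]

lemma bcan_szero (v : ModuleCat.of R M) : bcan D (0 : S) v = 0 := by
  refine coext_ext ?_
  intro z
  show D.E (z * 0) • v = _
  rw [mul_zero, map_zero, zero_smul]
  rfl

/-- the canonical balanced equivariant map `S → M → Hom_R(S, M)`. -/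
def bInd : S →+ (M →+ ((ModuleCat.coextendScalars l).obj (ModuleCat.of R M))) where
  toFun s :=
    { toFun := fun v => bcan D s v
      map_zero' := bcan_zero D s
      map_add' := fun a b => by exact bcan_add D (X := ModuleCat.of R M) s a b }
  map_zero' := by apply AddMonoidHom.ext; intro v; exact bcan_szero D v
  map_add' := fun s s' => by apply AddMonoidHom.ext; intro v; exact bcan_sadd D s s' v

/-- the inverse map `Hom_R(S, M) → V`, `f ↦ ∑ xᵢ • f(yᵢ)` (via `u`). -/
def h2 (hu1 : ∀ s r m, u (s * l r) m = u s (r • m))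
    (hu2 : ∀ s' s m, u (s' * s) m = s' • u s m) :
    (ModuleCat.coextendScalars l).obj (ModuleCat.of R M) ⟶ ModuleCat.of S V := ModuleCat.ofHom (X := (ModuleCat.coextendScalars l).obj (ModuleCat.of R M)) (Y := V) {
  toFun f := ∑ i, u (D.x i) (asHom l f (ofS l (D.y i)))
  map_add' a b := by
    dsimp only
    rw [← Finset.sum_add_distrib]
    congr 1; funext i
    rw [show asHom l (a + b) (ofS l (D.y i)) =
      asHom l a (ofS l (D.y i)) + asHom l b (ofS l (D.y i)) from rfl, map_add]
  map_smul' s f := by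
    dsimp only
    have e1 : ∀ i, asHom l (s • f) (ofS l (D.y i)) = asHom l f (ofS l (D.y i * s)) :=
      fun i => rfl
    show ∑ i, u (D.x i) (asHom l f (ofS l (D.y i * s))) = _
    simp only [expand D f s]
    calc ∑ i, u (D.x i) (∑ j, D.E (D.y i * (s * D.x j)) • asHom l f (ofS l (D.y j)))
        = ∑ i, ∑ j, u (D.x i * l (D.E (D.y i * (s * D.x j)))) (asHom l f (ofS l (D.y j))) := by
          congr 1; funext i
          rw [map_sum]
          congr 1; funext j
          rw [hu1]
      _ = ∑ j, ∑ i, u (D.x i * l (D.E (D.y i * (s * D.x j)))) (asHom l f (ofS l (D.y j))) :=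
          Finset.sum_comm
      _ = ∑ j, u (s * D.x j) (asHom l f (ofS l (D.y j))) := by
          congr 1; funext j
          rw [show ∑ i, u (D.x i * l (D.E (D.y i * (s * D.x j))))
              (asHom l f (ofS l (D.y j))) =
            (∑ i, u (D.x i * l (D.E (D.y i * (s * D.x j)))))
              (asHom l f (ofS l (D.y j))) from (AddMonoidHom.finset_sum_apply _ _ _).symm]
          rw [← map_sum u _ Finset.univ, D.hxy]
      _ = s • ∑ j, u (D.x j) (asHom l f (ofS l (D.y j))) := by
          rw [Finset.smul_sum]
          congr 1; funext j
          rw [hu2] }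

end Induced

section Induced2
variable {M : Type} [AddCommGroup M] [Module R M]
variable {V : Type} [AddCommGroup V] [Module S V] (u : S →+ M →+ V)

lemma bInd_balanced : ∀ (s : S) (r : R) (m : M),
    bInd D (s * l r) m = bInd D s (r • m) := by
  intro s r m
  refine coext_ext ?_
  intro z
  show D.E (z * (s * l r)) • m = D.E (z * s) • (r • m)
  rw [← mul_assoc, D.hE2, mul_smul]

lemma bInd_equivariant : ∀ (s' s : S) (m : M),
    bInd D (s' * s) m = s' • bInd D s m := by
  intro s' s m
  refine coext_ext ?_
  intro z
  show D.E (z * (s' * s)) • m = D.E ((z * s') * s) • m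
  rw [mul_assoc]

def h1 (hV : IsInducedTensor l M V u) :
    ModuleCat.of S V ⟶ (ModuleCat.coextendScalars l).obj (ModuleCat.of R M) :=
  ModuleCat.ofHom (hV.2.2 ((ModuleCat.coextendScalars l).obj (ModuleCat.of R M)) (bInd D)
    (bInd_balanced D) (bInd_equivariant D)).choose

lemma h1_spec (hV : IsInducedTensor l M V u) :
    ∀ (s : S) (m : M), h1 D u hV (u s m) = bInd D s m :=
  (hV.2.2 ((ModuleCat.coextendScalars l).obj (ModuleCat.of R M)) (bInd D)
    (bInd_balanced D) (bInd_equivariant D)).choose_spec.1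

/-- Any realization of the induced module `S ⊗_R M` is isomorphic to `Hom_R(S, M)`. -/
def inducedIso (hV : IsInducedTensor l M V u) :
    ModuleCat.of S V ≅ (ModuleCat.coextendScalars l).obj (ModuleCat.of R M) :=
  { hom := h1 D u hV
    inv := h2 D u hV.1 hV.2.1
    hom_inv_id := by
      have hc := h1_spec D u hV
      have e1 : ∀ (s : S) (m : M),
          (h1 D u hV ≫ h2 D u hV.1 hV.2.1) (u s m) = u s m := by
        intro s m
        show (h2 D u hV.1 hV.2.1) (h1 D u hV (u s m)) = u s m
        rw [hc]
        show ∑ i, u (D.x i) (asHom l (bcan D (X := ModuleCat.of R M) s m) (ofS l (D.y i))) =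
          u s m
        have e2 : ∀ i : Fin D.m, asHom l (bcan D (X := ModuleCat.of R M) s m)
            (ofS l (D.y i)) = D.E (D.y i * s) • m := fun i => rfl
        simp only [e2]
        have e3 : ∀ i : Fin D.m, u (D.x i) (D.E (D.y i * s) • m) =
            u (D.x i * l (D.E (D.y i * s))) m := fun i => (hV.1 _ _ _).symm
        simp only [e3]
        rw [show (∑ i, u (D.x i * l (D.E (D.y i * s))) m) =
          (∑ i, u (D.x i * l (D.E (D.y i * s)))) m from
            (AddMonoidHom.finset_sum_apply _ _ _).symm]
        rw [← map_sum u _ Finset.univ, D.hxy]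
      obtain ⟨h0, hh0, huni⟩ := hV.2.2 V u hV.1 hV.2.1
      have c1 := huni (show V →ₗ[S] V from (h1 D u hV ≫ h2 D u hV.1 hV.2.1).hom) e1
      have c2 := huni (show V →ₗ[S] V from ModuleCat.Hom.hom (𝟙 (ModuleCat.of S V))) (fun s m => rfl)
      exact ModuleCat.hom_ext (c1.trans c2.symm)
    inv_hom_id := by
      apply ModuleCat.hom_ext; apply LinearMap.ext
      intro f
      have hc := h1_spec D u hV
      show h1 D u hV ((h2 D u hV.1 hV.2.1) f) = f
      show h1 D u hV (∑ i, u (D.x i) (asHom l f (ofS l (D.y i)))) = f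
      rw [map_sum]
      refine coext_ext ?_
      intro z
      rw [asHom_sum]
      have e2 : ∀ i : Fin D.m,
          asHom l (h1 D u hV (u (D.x i) (asHom l f (ofS l (D.y i))))) (ofS l z) =
            D.E (z * D.x i) • asHom l f (ofS l (D.y i)) := by
        intro i
        rw [hc]
        rfl
      simp only [e2]
      exact recover D f z }

end Induced2

/-- Bundled central-projectivity data. -/
structure CPData (l : R →+* S) where
  k : ℕ
  i : S →+ (Fin k → R)
  p : (Fin k → R) →+ S
  hi1 : ∀ r s, i (l r * s) = fun j => r * i s j
  hi2 : ∀ s r, i (s * l r) = fun j => i s j * r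
  hp1 : ∀ r v, p (fun j => r * v j) = l r * p v
  hp2 : ∀ v r, p (fun j => v j * r) = p v * l r
  hpi : ∀ s, p (i s) = s

section CP
variable (C : CPData l) {ω : Type} [AddCommGroup ω] [Module R ω]

lemma single_mul (j : Fin C.k) (r : R) :
    (fun j' => (Pi.single j (1 : R) : Fin C.k → R) j' * r) = Pi.single j r := by
  funext j'
  rw [Pi.single_apply, Pi.single_apply, ite_mul, one_mul, zero_mul]

lemma mul_single (j : Fin C.k) (r : R) :
    (fun j' => r * (Pi.single j (1 : R) : Fin C.k → R) j') = Pi.single j r := by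
  funext j'
  rw [Pi.single_apply, Pi.single_apply, mul_ite, mul_one, mul_zero]

def ρ0 : (ModuleCat.restrictScalars l).obj
    ((ModuleCat.coextendScalars l).obj (ModuleCat.of R ω)) ⟶ ModuleCat.of R (Fin C.k → ω) := ModuleCat.ofHom (X := (ModuleCat.restrictScalars l).obj ((ModuleCat.coextendScalars l).obj (ModuleCat.of R ω))) (Y := Fin C.k → ω) {
  toFun f := fun j => asHom l f (ofS l (C.p (Pi.single j 1)))
  map_add' a b := rfl
  map_smul' r f := by
    dsimp only
    change ((ModuleCat.coextendScalars l).obj (ModuleCat.of R ω) : Type) at f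
    funext j
    show asHom l ((l r : S) • f) (ofS l (C.p (Pi.single j 1))) =
      r • asHom l f (ofS l (C.p (Pi.single j 1)))
    rw [asHom_smul, ← map_smul, ofS_smul, ← C.hp1, mul_single, ← C.hp2, single_mul] }

def σ0 : ModuleCat.of R (Fin C.k → ω) ⟶ (ModuleCat.restrictScalars l).obj
    ((ModuleCat.coextendScalars l).obj (ModuleCat.of R ω)) := ModuleCat.ofHom (X := Fin C.k → ω) (Y := (ModuleCat.restrictScalars l).obj ((ModuleCat.coextendScalars l).obj (ModuleCat.of R ω))) {
  toFun v := show SR l →ₗ[R] ModuleCat.of R ω from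
    { toFun := fun z => ∑ j, C.i (toS l z) j • v j
      map_add' := fun a b => by
        show ∑ j, C.i (toS l a + toS l b) j • v j = _
        rw [← Finset.sum_add_distrib]
        congr 1; funext j
        rw [map_add]
        show (C.i (toS l a) j + C.i (toS l b) j) • v j = _
        rw [add_smul]
      map_smul' := fun r z => by
        show ∑ j, C.i (l r * toS l z) j • v j = r • ∑ j, C.i (toS l z) j • v j
        rw [Finset.smul_sum]
        congr 1; funext j
        rw [C.hi1]
        show (r * C.i (toS l z) j) • v j = _
        rw [mul_smul] }
  map_add' v w := by
    refine coext_ext ?_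
    intro z
    show ∑ j, C.i z j • (v j + w j) = (∑ j, C.i z j • v j) + (∑ j, C.i z j • w j)
    rw [← Finset.sum_add_distrib]
    congr 1; funext j
    rw [smul_add]
  map_smul' r v := by
    refine coext_ext ?_
    intro z
    show ∑ j, C.i z j • (r • v j) = ∑ j, C.i (z * l r) j • v j
    congr 1; funext j
    rw [C.hi2]
    show C.i z j • (r • v j) = (C.i z j * r) • v j
    rw [mul_smul] }

lemma retract0 : ρ0 C (ω := ω) ≫ σ0 C = 𝟙 _ := by
  apply ModuleCat.hom_ext; apply LinearMap.ext
  intro f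
  refine coext_ext ?_
  intro z
  show ∑ j, C.i z j • asHom l f (ofS l (C.p (Pi.single j 1))) = asHom l f (ofS l z)
  calc ∑ j, C.i z j • asHom l f (ofS l (C.p (Pi.single j 1)))
      = asHom l f (∑ j, C.i z j • ofS l (C.p (Pi.single j 1))) := by
        rw [map_sum]; simp only [map_smul]
    _ = asHom l f (ofS l z) := by
        congr 1
        show (∑ j, ofS l (l (C.i z j) * C.p (Pi.single j 1))) = ofS l z
        rw [← ofS_sum]
        congr 1
        calc ∑ j, l (C.i z j) * C.p (Pi.single j 1)
            = ∑ j, C.p (Pi.single j (C.i z j)) := by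
              congr 1; funext j
              rw [← C.hp1, mul_single]
          _ = C.p (∑ j, Pi.single j (C.i z j)) := (map_sum C.p _ _).symm
          _ = C.p (C.i z) := by rw [Finset.univ_sum_single]
          _ = z := C.hpi z

end CP

theorem master (D : FrobData l) (C : CPData l)
    (ω : Type) [AddCommGroup ω] [Module R ω]
    (M : Type) [AddCommGroup M] [Module R M]
    (hM : ∀ n : ℕ, Subsingleton (((Ext ℤ (ModuleCat.{0} R) (n+1)).obj
      (Opposite.op (ModuleCat.of R M))).obj (ModuleCat.of R ω)))
    (W : Type) [AddCommGroup W] [Module S W] (t : S →+ ω →+ W)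
    (hW : IsInducedTensor l ω W t)
    (V : Type) [AddCommGroup V] [Module S V] (u : S →+ M →+ V)
    (hV : IsInducedTensor l M V u) (n : ℕ) :
    Subsingleton (((Ext ℤ (ModuleCat.{0} S) (n+1)).obj
      (Opposite.op (ModuleCat.of S V))).obj (ModuleCat.of S W)) := by
  obtain ⟨P⟩ := (inferInstance : HasProjectiveResolution (ModuleCat.of R M)).out
  -- step 1 : elementwise exactness over R with coefficients ω
  have hEω : EwExact P.complex (ModuleCat.of R ω) n := (subsingletonExt_iff P n _).1 (hM n)
  -- step 2 : with coefficients ω^k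
  have hEpow := ew_pow hEω C.k
  -- step 3 : with coefficients the restriction of W
  have hres : EwExact P.complex ((ModuleCat.restrictScalars l).obj
      ((ModuleCat.coextendScalars l).obj (ModuleCat.of R ω))) n :=
    ew_retract (ρ0 C) (σ0 C) (retract0 C) hEpow
  have hret : EwExact P.complex
      ((ModuleCat.restrictScalars l).obj (ModuleCat.of S W)) n := by
    refine ew_retract ((ModuleCat.restrictScalars l).map (inducedIso D t hW).hom)
      ((ModuleCat.restrictScalars l).map (inducedIso D t hW).inv) ?_ hres
    rw [← Functor.map_comp, Iso.hom_inv_id]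
    exact (ModuleCat.restrictScalars l).map_id (ModuleCat.of S W)
  -- step 4 : transfer through the adjunction
  have hES : EwExact (((ModuleCat.coextendScalars l).mapHomologicalComplex _).obj P.complex)
      (ModuleCat.of S W) n := ew_adj D hret
  -- step 5 : conclude via the mapped projective resolution
  exact (subsingletonExt_iff (mapRes D P (inducedIso D u hV).symm) n (ModuleCat.of S W)).2 hES

end FrobAux

/-- Let `S/R` be a Frobenius extension with `_R S_R` centrally
projective over `R` and `M` a finitely generated `R`-module with
`Ext^i_R(M, ω) = 0` for all `i ≥ 1`.  Then `Ext^i_S(S ⊗_R M, S ⊗_R ω) = 0` for all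
`i ≥ 1`, where `(W, t)` and `(V, u)` realize `S ⊗_R ω` and `S ⊗_R M`. -/
theorem extVanish_inducedTensor_of_extVanish
    (R S : Type) [Ring R] [Ring S] [IsNoetherianRing R] [IsNoetherianRing Rᵐᵒᵖ]
    [IsNoetherianRing S] [IsNoetherianRing Sᵐᵒᵖ] (l : R →+* S)
    (hFrob : IsFrobeniusExtension l) (hCP : IsCentrallyProjective l)
    (ω : Type) [AddCommGroup ω] [Module R ω] [Module.Finite R ω]
    (M : Type) [AddCommGroup M] [Module R M] [Module.Finite R M]
    (hM : ∀ i, 1 ≤ i → ExtVanish R i M ω)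
    (W : Type) [AddCommGroup W] [Module S W] (t : S →+ ω →+ W)
    (hW : IsInducedTensor l ω W t)
    (V : Type) [AddCommGroup V] [Module S V] (u : S →+ M →+ V)
    (hV : IsInducedTensor l M V u) :
    ∀ i, 1 ≤ i → ExtVanish S i V W := by
  obtain ⟨E, m, xx, yy, hE1, hE2, hxy, hyx⟩ := hFrob
  obtain ⟨k, ip, pp, hi1, hi2, hp1, hp2, hpi⟩ := hCP
  intro i hi
  obtain ⟨n, rfl⟩ : ∃ n, i = n + 1 := ⟨i - 1, (Nat.succ_pred_eq_of_pos hi).symm⟩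
  exact FrobAux.master (⟨E, m, xx, yy, hE1, hE2, hxy, hyx⟩ : FrobAux.FrobData l)
    (⟨k, ip, pp, hi1, hi2, hp1, hp2, hpi⟩ : FrobAux.CPData l) ω M
    (fun n => hM (n+1) (Nat.le_add_left 1 n)) W t hW V u hV n

end
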